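/- Sequential adjustment is coherent: let B, X, Y be random vectors and let (X,Y) denote the stacked random vector whose components are those of X followed by those of Y. Let W be the Moore–Penrose inverse of Var((X,Y)) and let W' be the Moore–Penrose inverse of the adjusted variance Var_X(Y). Then, almost surely (componentwise), E_{(X,Y)}(B) = E_X(B) + Cov_X(B,Y)·W'·(Y − E_X(Y)); that is, adjusting B by X and then by the residual information in Y gives the same result as adjusting B by X and Y simultaneously. -/

import Mathlib

open MeasureTheory Matrix

variable {Ω : Type*}

/-- The covariance matrix of two random vectors `B` (dimension `m`) and `D` (dimension `n`):
the `(i,j)` entry is `E[Bᵢ·Dⱼ] − E[Bᵢ]·E[Dⱼ]`. -/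
noncomputable def cov [MeasurableSpace Ω] (μ : Measure Ω) {m n : ℕ}
    (B : Fin m → Ω → ℝ) (D : Fin n → Ω → ℝ) : Matrix (Fin m) (Fin n) ℝ :=
  Matrix.of fun i j =>
    (∫ ω, B i ω * D j ω ∂μ) - (∫ ω, B i ω ∂μ) * (∫ ω, D j ω ∂μ)

/-- `W` is a Moore–Penrose inverse of `V`. -/
def IsMoorePenrose {m n : ℕ} (V : Matrix (Fin m) (Fin n) ℝ)
    (W : Matrix (Fin n) (Fin m) ℝ) : Prop :=
  V * W * V = V ∧ W * V * W = W ∧ (V * W)ᵀ = V * W ∧ (W * V)ᵀ = W * V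

/-- The adjusted expectation `E_D(B)` (computed with the matrix `W`, intended to be the
Moore–Penrose inverse of `Var(D)`): the `i`-th component is
`E[Bᵢ] + Σ_j (Cov(B,D)·W)_{ij}·(Dⱼ − E[Dⱼ])`. -/
noncomputable def adjExp [MeasurableSpace Ω] (μ : Measure Ω) {m n : ℕ}
    (B : Fin m → Ω → ℝ) (D : Fin n → Ω → ℝ)
    (W : Matrix (Fin n) (Fin n) ℝ) : Fin m → Ω → ℝ :=
  fun i ω => (∫ ω', B i ω' ∂μ) + ∑ j, (cov μ B D * W) i j * (D j ω - ∫ ω', D j ω' ∂μ)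

/-- The adjusted covariance `Cov_D(B,C) = Cov(B − E_D(B), C − E_D(C))`. -/
noncomputable def adjCov [MeasurableSpace Ω] (μ : Measure Ω) {m p n : ℕ}
    (B : Fin m → Ω → ℝ) (C : Fin p → Ω → ℝ) (D : Fin n → Ω → ℝ)
    (W : Matrix (Fin n) (Fin n) ℝ) : Matrix (Fin m) (Fin p) ℝ :=
  cov μ (fun i ω => B i ω - adjExp μ B D W i ω) (fun j ω => C j ω - adjExp μ C D W j ω)

noncomputable def covRV [MeasurableSpace Ω] (μ : Measure Ω) (f g : Ω → ℝ) : ℝ :=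
  (∫ ω, f ω * g ω ∂μ) - (∫ ω, f ω ∂μ) * (∫ ω, g ω ∂μ)

section Aux
variable [MeasurableSpace Ω] {μ : Measure Ω} [IsProbabilityMeasure μ]

lemma int_mul2 {f g : Ω → ℝ} (hf : MemLp f 2 μ) (hg : MemLp g 2 μ) :
    Integrable (fun ω => f ω * g ω) μ := by
  refine (hf.integrable_sq.add hg.integrable_sq).mono'
    (hf.aestronglyMeasurable.mul hg.aestronglyMeasurable)
    (Filter.Eventually.of_forall fun ω => ?_)
  simp only [norm_mul, Real.norm_eq_abs, Pi.add_apply]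
  nlinarith [sq_abs (f ω), sq_abs (g ω), sq_nonneg (|f ω| - |g ω|), abs_nonneg (f ω),
    abs_nonneg (g ω)]

lemma int1 {f : Ω → ℝ} (hf : MemLp f 2 μ) : Integrable f μ := hf.integrable one_le_two

lemma covRV_comm (f g : Ω → ℝ) : covRV μ f g = covRV μ g f := by
  unfold covRV
  rw [mul_comm (∫ ω, f ω ∂μ)]
  congr 1
  exact integral_congr_ae (Filter.Eventually.of_forall fun ω => mul_comm _ _)

lemma covRV_add_left {f g h : Ω → ℝ} (hf : MemLp f 2 μ) (hg : MemLp g 2 μ)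
    (hh : MemLp h 2 μ) :
    covRV μ (fun ω => f ω + g ω) h = covRV μ f h + covRV μ g h := by
  unfold covRV
  rw [integral_add (int1 hf) (int1 hg)]
  simp_rw [add_mul]
  rw [integral_add (int_mul2 hf hh) (int_mul2 hg hh)]
  ring

lemma covRV_smul_left (c : ℝ) (f h : Ω → ℝ) :
    covRV μ (fun ω => c * f ω) h = c * covRV μ f h := by
  unfold covRV
  simp_rw [mul_assoc]
  rw [integral_const_mul, integral_const_mul]
  ring

lemma covRV_const_left (c : ℝ) (h : Ω → ℝ) : covRV μ (fun _ => c) h = 0 := by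
  unfold covRV
  rw [integral_const_mul]
  simp

lemma covRV_add_const_left (c : ℝ) {f h : Ω → ℝ} (hf : MemLp f 2 μ) (hh : MemLp h 2 μ) :
    covRV μ (fun ω => f ω + c) h = covRV μ f h := by
  rw [covRV_add_left hf (memLp_const c) hh, covRV_const_left, add_zero]

lemma covRV_sum_left {ι : Type*} (s : Finset ι) (F : ι → Ω → ℝ) {h : Ω → ℝ}
    (hF : ∀ k ∈ s, MemLp (F k) 2 μ) (hh : MemLp h 2 μ) :
    covRV μ (fun ω => ∑ k ∈ s, F k ω) h = ∑ k ∈ s, covRV μ (F k) h := by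
  unfold covRV
  rw [integral_finset_sum s (fun k hk => int1 (hF k hk))]
  simp_rw [Finset.sum_mul]
  rw [integral_finset_sum s (fun k hk => int_mul2 (hF k hk) hh),
    Finset.sum_sub_distrib]

lemma covRV_add_right {f g h : Ω → ℝ} (hf : MemLp f 2 μ) (hg : MemLp g 2 μ)
    (hh : MemLp h 2 μ) :
    covRV μ h (fun ω => f ω + g ω) = covRV μ h f + covRV μ h g := by
  rw [covRV_comm, covRV_add_left hf hg hh, covRV_comm f h, covRV_comm g h]

lemma covRV_smul_right (c : ℝ) (f h : Ω → ℝ) :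
    covRV μ h (fun ω => c * f ω) = c * covRV μ h f := by
  rw [covRV_comm, covRV_smul_left, covRV_comm]

lemma covRV_add_const_right (c : ℝ) {f h : Ω → ℝ} (hf : MemLp f 2 μ) (hh : MemLp h 2 μ) :
    covRV μ h (fun ω => f ω + c) = covRV μ h f := by
  rw [covRV_comm, covRV_add_const_left c hf hh, covRV_comm]

lemma covRV_sum_right {ι : Type*} (s : Finset ι) (F : ι → Ω → ℝ) {h : Ω → ℝ}
    (hF : ∀ k ∈ s, MemLp (F k) 2 μ) (hh : MemLp h 2 μ) :
    covRV μ h (fun ω => ∑ k ∈ s, F k ω) = ∑ k ∈ s, covRV μ h (F k) := by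
  rw [covRV_comm, covRV_sum_left s F hF hh]
  exact Finset.sum_congr rfl fun k _ => covRV_comm _ _


lemma memℒp_combo {n : ℕ} (r : Fin n → ℝ) (D : Fin n → Ω → ℝ)
    (hD : ∀ k, MemLp (D k) 2 μ) : MemLp (fun ω => ∑ k, r k * D k ω) 2 μ :=
  memLp_finset_sum _ fun k _ => (hD k).const_mul _

lemma covRV_combo {a b : ℕ} (r : Fin a → ℝ) (s : Fin b → ℝ) (F : Fin a → Ω → ℝ)
    (G : Fin b → Ω → ℝ) (hF : ∀ k, MemLp (F k) 2 μ) (hG : ∀ l, MemLp (G l) 2 μ) :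
    covRV μ (fun ω => ∑ k, r k * F k ω) (fun ω => ∑ l, s l * G l ω)
      = ∑ k, ∑ l, r k * (s l * covRV μ (F k) (G l)) := by
  rw [covRV_sum_left _ _ (fun k _ => (hF k).const_mul _) (memℒp_combo s G hG)]
  refine Finset.sum_congr rfl fun k _ => ?_
  rw [covRV_smul_left]
  rw [covRV_sum_right _ _ (fun l _ => (hG l).const_mul _) (hF k), Finset.mul_sum]
  refine Finset.sum_congr rfl fun l _ => ?_
  rw [covRV_smul_right]

lemma ae_eq_integral_of_var_zero {g : Ω → ℝ} (hg : MemLp g 2 μ) (h : covRV μ g g = 0) :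
    ∀ᵐ ω ∂μ, g ω = ∫ ω', g ω' ∂μ := by
  set c := ∫ ω', g ω' ∂μ with hc
  have hint : Integrable (fun ω => (g ω - c) * (g ω - c)) μ :=
    int_mul2 (hg.sub (memLp_const c)) (hg.sub (memLp_const c))
  have hI : (∫ ω, (g ω - c) * (g ω - c) ∂μ) = 0 := by
    have he : ∀ ω, (g ω - c) * (g ω - c) = g ω * g ω - 2 * c * g ω + c * c := fun ω => by ring
    simp_rw [he]
    have hi1 : Integrable (fun ω => 2 * c * g ω) μ := (int1 hg).const_mul (2 * c)
    have hi2 : Integrable (fun ω => g ω * g ω - 2 * c * g ω) μ := (int_mul2 hg hg).sub hi1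
    rw [integral_add hi2 (integrable_const _), integral_sub (int_mul2 hg hg) hi1,
      integral_const_mul]
    unfold covRV at h
    simp only [integral_const, probReal_univ, measure_univ, ENNReal.toReal_one, smul_eq_mul, one_mul]
    rw [← hc] at h ⊢
    nlinarith [h]
  have h0 := (integral_eq_zero_iff_of_nonneg (fun ω => mul_self_nonneg (g ω - c)) hint).mp hI
  filter_upwards [h0] with ω hω
  have h2 : (g ω - c) * (g ω - c) = 0 := hω
  have := mul_self_eq_zero.mp h2
  linarith

lemma covRV_eq_zero {f g : Ω → ℝ} (hf : MemLp f 2 μ) (hg : MemLp g 2 μ)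
    (h : covRV μ g g = 0) : covRV μ f g = 0 := by
  have hc := ae_eq_integral_of_var_zero hg h
  unfold covRV
  have he : (∫ ω, f ω * g ω ∂μ) = ∫ ω, f ω * (∫ ω', g ω' ∂μ) ∂μ :=
    integral_congr_ae (by filter_upwards [hc] with ω hω; rw [hω])
  rw [he, integral_mul_const]
  ring

end Aux

section MP

lemma mp_unique {n : ℕ} {V W1 W2 : Matrix (Fin n) (Fin n) ℝ}
    (h1 : IsMoorePenrose V W1) (h2 : IsMoorePenrose V W2) : W1 = W2 := by
  obtain ⟨a1, b1, c1, d1⟩ := h1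
  obtain ⟨a2, b2, c2, d2⟩ := h2
  have e1 : V * W1 = V * W2 := by
    calc V * W1 = (V * W2 * V) * W1 := by rw [a2]
    _ = (V * W2) * (V * W1) := by rw [Matrix.mul_assoc (V * W2) V W1]
    _ = (V * W2)ᵀ * (V * W1)ᵀ := by rw [c1, c2]
    _ = W2ᵀ * (V * W1 * V)ᵀ := by
        simp only [Matrix.transpose_mul, Matrix.mul_assoc]
    _ = W2ᵀ * Vᵀ := by rw [a1]
    _ = (V * W2)ᵀ := by rw [Matrix.transpose_mul]
    _ = V * W2 := c2
  have e2 : W1 * V = W2 * V := by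
    calc W1 * V = W1 * (V * W2 * V) := by rw [a2]
    _ = (W1 * V) * (W2 * V) := by
        simp only [Matrix.mul_assoc]
    _ = (W1 * V)ᵀ * (W2 * V)ᵀ := by rw [d1, d2]
    _ = (V * W1 * V)ᵀ * W2ᵀ := by
        simp only [Matrix.transpose_mul, Matrix.mul_assoc]
    _ = Vᵀ * W2ᵀ := by rw [a1]
    _ = (W2 * V)ᵀ := by rw [Matrix.transpose_mul]
    _ = W2 * V := d2
  calc W1 = W1 * V * W1 := b1.symm
  _ = W2 * V * W1 := by rw [e2]
  _ = W2 * (V * W1) := by rw [Matrix.mul_assoc]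
  _ = W2 * (V * W2) := by rw [e1]
  _ = W2 * V * W2 := by rw [Matrix.mul_assoc]
  _ = W2 := b2

lemma mp_symm {n : ℕ} {V W : Matrix (Fin n) (Fin n) ℝ} (hV : Vᵀ = V)
    (h : IsMoorePenrose V W) : Wᵀ = W := by
  obtain ⟨a, b, c, d⟩ := h
  have h1 : V * Wᵀ * V = V := by
    have t : (V * Wᵀ * V)ᵀ = V := by
      rw [Matrix.transpose_mul, Matrix.transpose_mul, Matrix.transpose_transpose, hV,
        ← Matrix.mul_assoc, a]
    have := congrArg Matrix.transpose t
    rwa [Matrix.transpose_transpose, hV] at this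
  have h2 : Wᵀ * V * Wᵀ = Wᵀ := by
    have t : (Wᵀ * V * Wᵀ)ᵀ = W := by
      rw [Matrix.transpose_mul, Matrix.transpose_mul, Matrix.transpose_transpose, hV,
        ← Matrix.mul_assoc, b]
    have := congrArg Matrix.transpose t
    rwa [Matrix.transpose_transpose] at this
  have h3 : (V * Wᵀ)ᵀ = V * Wᵀ := by
    have l : (V * Wᵀ)ᵀ = W * V := by
      rw [Matrix.transpose_mul, Matrix.transpose_transpose, hV]
    have r : V * Wᵀ = W * V := by
      have : V * Wᵀ = (W * Vᵀ)ᵀ := by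
        rw [Matrix.transpose_mul, Matrix.transpose_transpose]
      rw [this, hV, d]
    rw [l, r]
  have h4 : (Wᵀ * V)ᵀ = Wᵀ * V := by
    have l : (Wᵀ * V)ᵀ = V * W := by
      rw [Matrix.transpose_mul, Matrix.transpose_transpose, hV]
    have r : Wᵀ * V = V * W := by
      have : Wᵀ * V = (Vᵀ * W)ᵀ := by
        rw [Matrix.transpose_mul, Matrix.transpose_transpose]
      rw [this, hV, c]
    rw [l, r]
  exact (mp_unique ⟨a, b, c, d⟩ ⟨h1, h2, h3, h4⟩).symm

end MP

section Cov
variable [MeasurableSpace Ω] {μ : MeasureTheory.Measure Ω} [MeasureTheory.IsProbabilityMeasure μ]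
open MeasureTheory

lemma cov_apply {a n : ℕ} (B : Fin a → Ω → ℝ) (D : Fin n → Ω → ℝ) (i : Fin a) (j : Fin n) :
    cov μ B D i j = covRV μ (B i) (D j) := rfl

lemma cov_transpose {a n : ℕ} (B : Fin a → Ω → ℝ) (D : Fin n → Ω → ℝ) :
    (cov μ B D)ᵀ = cov μ D B := by
  ext i j
  rw [Matrix.transpose_apply, cov_apply, cov_apply, covRV_comm]

lemma cov_mp {a n : ℕ} {B : Fin a → Ω → ℝ} {D : Fin n → Ω → ℝ}
    (hB : ∀ i, MemLp (B i) 2 μ) (hD : ∀ k, MemLp (D k) 2 μ)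
    (W : Matrix (Fin n) (Fin n) ℝ)
    (hVWV : cov μ D D * W * cov μ D D = cov μ D D) :
    cov μ B D * W * cov μ D D = cov μ B D := by
  set V := cov μ D D with hV
  set N : Matrix (Fin n) (Fin n) ℝ := W * V - 1 with hN
  have hVN : V * N = 0 := by
    rw [hN, Matrix.mul_sub, Matrix.mul_one, ← Matrix.mul_assoc, hVWV, sub_self]
  have hCN : cov μ B D * N = 0 := by
    ext i l
    have hg : covRV μ (fun ω => ∑ k, N k l * D k ω) (fun ω => ∑ k, N k l * D k ω) = 0 := by
      rw [covRV_combo _ _ _ _ hD hD]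
      refine Finset.sum_eq_zero fun k _ => ?_
      have hin : ∑ k', N k' l * covRV μ (D k) (D k') = 0 := by
        have h0 : (V * N) k l = 0 := by rw [hVN]; simp
        rw [← h0, Matrix.mul_apply]
        exact Finset.sum_congr rfl fun k' _ => by rw [hV, cov_apply]; ring
      rw [← Finset.mul_sum, hin, mul_zero]
    have hann : covRV μ (B i) (fun ω => ∑ k, N k l * D k ω) = 0 :=
      covRV_eq_zero (hB i) (memℒp_combo _ _ hD) hg
    rw [covRV_sum_right _ _ (fun k _ => (hD k).const_mul _) (hB i)] at hann
    simp_rw [covRV_smul_right] at hann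
    rw [Matrix.mul_apply, Matrix.zero_apply, ← hann]
    exact Finset.sum_congr rfl fun k _ => by rw [cov_apply]; ring
  have he : cov μ B D * N = cov μ B D * (W * V) - cov μ B D := by
    rw [hN, Matrix.mul_sub, Matrix.mul_one]
  rw [he, sub_eq_zero] at hCN
  rw [Matrix.mul_assoc]
  exact hCN

lemma resid_eq {a p' : ℕ} (B : Fin a → Ω → ℝ) (X : Fin p' → Ω → ℝ)
    (WX : Matrix (Fin p') (Fin p') ℝ) (i : Fin a) :
    (fun ω => B i ω - adjExp μ B X WX i ω)
      = fun ω => B i ω + ∑ l, (-(cov μ B X * WX) i l) * X l ω +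
          (∑ l, (cov μ B X * WX) i l * (∫ ω', X l ω' ∂μ) - ∫ ω', B i ω' ∂μ) := by
  funext ω
  simp only [adjExp]
  simp_rw [mul_sub, neg_mul, Finset.sum_sub_distrib, Finset.sum_neg_distrib]
  ring

lemma memℒp_resid {a p' : ℕ} {B : Fin a → Ω → ℝ} {X : Fin p' → Ω → ℝ}
    (hB : ∀ i, MemLp (B i) 2 μ) (hX : ∀ l, MemLp (X l) 2 μ)
    (WX : Matrix (Fin p') (Fin p') ℝ) (i : Fin a) :
    MemLp (fun ω => B i ω - adjExp μ B X WX i ω) 2 μ := by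
  rw [resid_eq]
  exact ((hB i).add (memℒp_combo _ _ hX)).add (memLp_const _)

lemma cov_symm_mat {n : ℕ} (D : Fin n → Ω → ℝ) : (cov μ D D)ᵀ = cov μ D D :=
  cov_transpose D D

lemma adjCov_eq {a c p' : ℕ} {B : Fin a → Ω → ℝ} {C : Fin c → Ω → ℝ} {X : Fin p' → Ω → ℝ}
    (hB : ∀ i, MemLp (B i) 2 μ) (hC : ∀ j, MemLp (C j) 2 μ) (hX : ∀ l, MemLp (X l) 2 μ)
    {WX : Matrix (Fin p') (Fin p') ℝ} (hWX : IsMoorePenrose (cov μ X X) WX) :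
    adjCov μ B C X WX = cov μ B C - cov μ B X * WX * cov μ X C := by
  have hWXs : WXᵀ = WX := mp_symm (cov_symm_mat X) hWX
  ext i j
  show covRV μ (fun ω => B i ω - adjExp μ B X WX i ω)
      (fun ω => C j ω - adjExp μ C X WX j ω) = _
  rw [resid_eq, resid_eq]
  set M : Matrix (Fin a) (Fin p') ℝ := cov μ B X * WX with hM
  set N : Matrix (Fin c) (Fin p') ℝ := cov μ C X * WX with hNd
  have hMc : MemLp (fun ω => ∑ l, (-M i l) * X l ω) 2 μ := memℒp_combo _ _ hX
  have hNc : MemLp (fun ω => ∑ l, (-N j l) * X l ω) 2 μ := memℒp_combo _ _ hX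
  have hBM : MemLp (fun ω => B i ω + ∑ l, (-M i l) * X l ω) 2 μ := (hB i).add hMc
  have hCN : MemLp (fun ω => C j ω + ∑ l, (-N j l) * X l ω) 2 μ := (hC j).add hNc
  have hCN' : MemLp (fun ω => (C j ω + ∑ l, (-N j l) * X l ω) +
      (∑ l, N j l * (∫ ω', X l ω' ∂μ) - ∫ ω', C j ω' ∂μ)) 2 μ := hCN.add (memLp_const _)
  rw [covRV_add_const_left _ hBM hCN']
  rw [covRV_add_const_right _ hCN hBM]
  rw [covRV_add_left (hB i) hMc hCN]
  rw [covRV_add_right (hC j) hNc (hB i), covRV_add_right (hC j) hNc hMc]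
  rw [covRV_combo _ _ _ _ hX hX]
  rw [covRV_sum_right _ _ (fun l _ => (hX l).const_mul _) (hB i)]
  rw [covRV_sum_left _ _ (fun l _ => (hX l).const_mul _) (hC j)]
  simp_rw [covRV_smul_right, covRV_smul_left]
  -- now a scalar identity
  have htri : cov μ B X * WX * cov μ X C = cov μ B X * Nᵀ := by
    rw [hNd, Matrix.transpose_mul, hWXs, cov_transpose, Matrix.mul_assoc]
  have s1 : ∑ l, N j l * covRV μ (B i) (X l) = (cov μ B X * WX * cov μ X C) i j := by
    rw [htri, Matrix.mul_apply]
    exact Finset.sum_congr rfl fun l _ => by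
      rw [Matrix.transpose_apply, cov_apply]; ring
  have s2 : ∑ k, M i k * covRV μ (X k) (C j) = (cov μ B X * WX * cov μ X C) i j := by
    rw [Matrix.mul_apply]
    exact Finset.sum_congr rfl fun k _ => by
      rw [hM, cov_apply]
  have s3 : ∑ k, ∑ l, M i k * (N j l * covRV μ (X k) (X l))
      = (cov μ B X * WX * cov μ X C) i j := by
    have hmm : M * cov μ X X * Nᵀ = cov μ B X * WX * cov μ X C := by
      rw [hNd, Matrix.transpose_mul, hWXs, cov_transpose, hM]
      calc cov μ B X * WX * cov μ X X * (WX * cov μ X C)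
          = cov μ B X * (WX * cov μ X X * WX) * cov μ X C := by
            simp only [Matrix.mul_assoc]
        _ = cov μ B X * WX * cov μ X C := by rw [hWX.2.1, Matrix.mul_assoc]
    rw [← hmm, Matrix.mul_apply]
    rw [Finset.sum_comm]
    refine Finset.sum_congr rfl fun l _ => ?_
    rw [Matrix.mul_apply, Finset.sum_mul]
    exact Finset.sum_congr rfl fun k _ => by
      rw [Matrix.transpose_apply, cov_apply]; ring
  simp only [neg_mul, mul_neg, neg_neg, Finset.sum_neg_distrib]
  rw [Matrix.sub_apply, cov_apply]
  have s1' := s1; have s2' := s2; have s3' := s3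
  linarith [s1, s2, s3]

end Cov

/-- coherence of sequential adjustment: almost surely, componentwise,
`E_{(X,Y)}(B) = E_X(B) + Cov_X(B,Y)·W'·(Y − E_X(Y))`, where `(X,Y)` is the stacked vector
`Fin.append X Y`, `W` is the Moore–Penrose inverse of `Var((X,Y))`, `W_X` that of `Var(X)`,
and `W'` that of the adjusted variance `Var_X(Y)`. -/
theorem sequential_adjustment_coherent [MeasurableSpace Ω] (μ : Measure Ω)
    [IsProbabilityMeasure μ] {m p q : ℕ}
    (B : Fin m → Ω → ℝ) (X : Fin p → Ω → ℝ) (Y : Fin q → Ω → ℝ)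
    (hB : ∀ i, Measurable (B i) ∧ MemLp (B i) 2 μ)
    (hX : ∀ i, Measurable (X i) ∧ MemLp (X i) 2 μ)
    (hY : ∀ i, Measurable (Y i) ∧ MemLp (Y i) 2 μ)
    (WX : Matrix (Fin p) (Fin p) ℝ) (hWX : IsMoorePenrose (cov μ X X) WX)
    (W : Matrix (Fin (p + q)) (Fin (p + q)) ℝ)
    (hW : IsMoorePenrose (cov μ (Fin.append X Y) (Fin.append X Y)) W)
    (W' : Matrix (Fin q) (Fin q) ℝ) (hW' : IsMoorePenrose (adjCov μ Y Y X WX) W') :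
    ∀ i, ∀ᵐ ω ∂μ,
      adjExp μ B (Fin.append X Y) W i ω =
        adjExp μ B X WX i ω +
          ∑ j, (adjCov μ B Y X WX * W') i j * (Y j ω - adjExp μ Y X WX j ω) := by
  intro i
  have hB2 : ∀ k, MemLp (B k) 2 μ := fun k => (hB k).2
  have hX2 : ∀ k, MemLp (X k) 2 μ := fun k => (hX k).2
  have hY2 : ∀ k, MemLp (Y k) 2 μ := fun k => (hY k).2
  set Z := Fin.append X Y with hZdef
  have hZX : ∀ k1 : Fin p, Z (Fin.castAdd q k1) = X k1 := fun k1 => Fin.append_left X Y k1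
  have hZY : ∀ k2 : Fin q, Z (Fin.natAdd p k2) = Y k2 := fun k2 => Fin.append_right X Y k2
  have hZ2 : ∀ k, MemLp (Z k) 2 μ := fun k => by
    refine Fin.addCases (fun k1 => ?_) (fun k2 => ?_) k
    · rw [hZX k1]; exact hX2 k1
    · rw [hZY k2]; exact hY2 k2
  have h1 : cov μ B Z * W * cov μ Z Z = cov μ B Z := cov_mp hB2 hZ2 W hW.1
  have h2 : cov μ B X * WX * cov μ X X = cov μ B X := cov_mp hB2 hX2 WX hWX.1
  have h3 : cov μ Y X * WX * cov μ X X = cov μ Y X := cov_mp hY2 hX2 WX hWX.1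
  have hresB : ∀ i', MemLp (fun ω => B i' ω - adjExp μ B X WX i' ω) 2 μ :=
    memℒp_resid hB2 hX2 WX
  have hresY : ∀ j', MemLp (fun ω => Y j' ω - adjExp μ Y X WX j' ω) 2 μ :=
    memℒp_resid hY2 hX2 WX
  have h4 : adjCov μ B Y X WX * W' * adjCov μ Y Y X WX = adjCov μ B Y X WX :=
    cov_mp (B := fun i' ω => B i' ω - adjExp μ B X WX i' ω)
      (D := fun j' ω => Y j' ω - adjExp μ Y X WX j' ω) hresB hresY W' hW'.1
  have hCa : adjCov μ B Y X WX = cov μ B Y - cov μ B X * WX * cov μ X Y :=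
    adjCov_eq hB2 hY2 hX2 hWX
  have hCs : adjCov μ Y Y X WX = cov μ Y Y - cov μ Y X * WX * cov μ X Y :=
    adjCov_eq hY2 hY2 hX2 hWX
  set S : Matrix (Fin m) (Fin q) ℝ := adjCov μ B Y X WX * W' with hS
  set A : Matrix (Fin m) (Fin (p + q)) ℝ := Matrix.of fun i' k =>
    Fin.addCases (fun k1 => (cov μ B X * WX - S * (cov μ Y X * WX)) i' k1)
      (fun k2 => S i' k2) k with hA
  -- block identities
  have hb1 : (cov μ B X * WX - S * (cov μ Y X * WX)) * cov μ X X + S * cov μ Y X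
      = cov μ B X := by
    rw [Matrix.sub_mul, h2, Matrix.mul_assoc S, h3]
    abel
  have hb2 : (cov μ B X * WX - S * (cov μ Y X * WX)) * cov μ X Y + S * cov μ Y Y
      = cov μ B Y := by
    rw [Matrix.sub_mul, Matrix.mul_assoc S]
    have e4 : S * cov μ Y Y - S * (cov μ Y X * WX * cov μ X Y) = adjCov μ B Y X WX := by
      rw [← Matrix.mul_sub, ← hCs, hS]
      exact h4
    have e5 : cov μ B X * WX * cov μ X Y - S * (cov μ Y X * WX * cov μ X Y) + S * cov μ Y Y
        = cov μ B X * WX * cov μ X Y +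
            (S * cov μ Y Y - S * (cov μ Y X * WX * cov μ X Y)) := by abel
    rw [e5, e4, hCa]
    abel
  have hAV : A * cov μ Z Z = cov μ B Z := by
    ext i' l
    refine Fin.addCases (fun l1 => ?_) (fun l2 => ?_) l
    · have lhs : (A * cov μ Z Z) i' (Fin.castAdd q l1)
          = ((cov μ B X * WX - S * (cov μ Y X * WX)) * cov μ X X + S * cov μ Y X) i' l1 := by
        rw [Matrix.mul_apply, Fin.sum_univ_add, Matrix.add_apply, Matrix.mul_apply,
          Matrix.mul_apply]
        congr 1
        · refine Finset.sum_congr rfl fun k1 _ => ?_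
          rw [hA]
          simp only [Matrix.of_apply, Fin.addCases_left]
          congr 1
          rw [cov_apply, cov_apply, hZX, hZX]
        · refine Finset.sum_congr rfl fun k2 _ => ?_
          rw [hA]
          simp only [Matrix.of_apply, Fin.addCases_right]
          congr 1
          rw [cov_apply, cov_apply, hZY, hZX]
      rw [lhs, hb1, cov_apply, cov_apply, hZX]
    · have lhs : (A * cov μ Z Z) i' (Fin.natAdd p l2)
          = ((cov μ B X * WX - S * (cov μ Y X * WX)) * cov μ X Y + S * cov μ Y Y) i' l2 := by
        rw [Matrix.mul_apply, Fin.sum_univ_add, Matrix.add_apply, Matrix.mul_apply,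
          Matrix.mul_apply]
        congr 1
        · refine Finset.sum_congr rfl fun k1 _ => ?_
          rw [hA]
          simp only [Matrix.of_apply, Fin.addCases_left]
          congr 1
          rw [cov_apply, cov_apply, hZX, hZY]
        · refine Finset.sum_congr rfl fun k2 _ => ?_
          rw [hA]
          simp only [Matrix.of_apply, Fin.addCases_right]
          congr 1
          rw [cov_apply, cov_apply, hZY, hZY]
      rw [lhs, hb2, cov_apply, cov_apply, hZY]
  set E : Matrix (Fin m) (Fin (p + q)) ℝ := cov μ B Z * W - A with hE
  have hEV : E * cov μ Z Z = 0 := by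
    rw [hE, Matrix.sub_mul, h1, hAV, sub_self]
  have hq0 : covRV μ (fun ω => ∑ k, E i k * Z k ω) (fun ω => ∑ k, E i k * Z k ω) = 0 := by
    rw [covRV_combo _ _ _ _ hZ2 hZ2]
    refine Finset.sum_eq_zero fun k _ => ?_
    rw [← Finset.mul_sum]
    have h0 : (E * cov μ Z Z) i k = 0 := by rw [hEV]; simp
    have hin : ∑ l, E i l * covRV μ (Z k) (Z l) = 0 := by
      rw [← h0, Matrix.mul_apply]
      refine Finset.sum_congr rfl fun l _ => ?_
      rw [covRV_comm (Z k) (Z l), ← cov_apply]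
    rw [hin, mul_zero]
  have hae := ae_eq_integral_of_var_zero (memℒp_combo _ _ hZ2) hq0
  have hMean : (∫ ω', ∑ k, E i k * Z k ω' ∂μ) = ∑ k, E i k * (∫ ω', Z k ω' ∂μ) := by
    rw [integral_finset_sum _ (fun k _ => (int1 (hZ2 k)).const_mul _)]
    exact Finset.sum_congr rfl fun k _ => integral_const_mul _ _
  filter_upwards [hae] with ω hω
  have key : ∑ k, E i k * (Z k ω - ∫ ω', Z k ω' ∂μ) = 0 := by
    simp_rw [mul_sub]
    rw [Finset.sum_sub_distrib, hω, hMean, sub_self]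
  have split : ∑ k, (cov μ B Z * W) i k * (Z k ω - ∫ ω', Z k ω' ∂μ)
      = ∑ k, A i k * (Z k ω - ∫ ω', Z k ω' ∂μ) := by
    have hEA : ∀ k, (cov μ B Z * W) i k = E i k + A i k := fun k => by
      rw [hE, Matrix.sub_apply]; ring
    simp_rw [hEA, add_mul]
    rw [Finset.sum_add_distrib, key, zero_add]
  show adjExp μ B Z W i ω = adjExp μ B X WX i ω +
    ∑ j, S i j * (Y j ω - adjExp μ Y X WX j ω)
  simp only [adjExp]
  rw [split, Fin.sum_univ_add]
  simp only [hA, Matrix.of_apply, Fin.addCases_left, Fin.addCases_right, hZX, hZY]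
  have rhs : ∑ j, S i j * (Y j ω - ((∫ ω', Y j ω' ∂μ)
          + ∑ l, (cov μ Y X * WX) j l * (X l ω - ∫ ω', X l ω' ∂μ)))
      = ∑ k2, S i k2 * (Y k2 ω - ∫ ω', Y k2 ω' ∂μ)
        - ∑ k1, (S * (cov μ Y X * WX)) i k1 * (X k1 ω - ∫ ω', X k1 ω' ∂μ) := by
    calc ∑ j, S i j * (Y j ω - ((∫ ω', Y j ω' ∂μ)
            + ∑ l, (cov μ Y X * WX) j l * (X l ω - ∫ ω', X l ω' ∂μ)))
        = ∑ j, (S i j * (Y j ω - ∫ ω', Y j ω' ∂μ)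
            - ∑ l, S i j * (cov μ Y X * WX) j l * (X l ω - ∫ ω', X l ω' ∂μ)) := by
          refine Finset.sum_congr rfl fun j _ => ?_
          have hy : Y j ω - ((∫ ω', Y j ω' ∂μ)
                + ∑ l, (cov μ Y X * WX) j l * (X l ω - ∫ ω', X l ω' ∂μ))
              = (Y j ω - ∫ ω', Y j ω' ∂μ)
                - ∑ l, (cov μ Y X * WX) j l * (X l ω - ∫ ω', X l ω' ∂μ) := by ring
          rw [hy, mul_sub, Finset.mul_sum]
          congr 1
          exact Finset.sum_congr rfl fun l _ => (mul_assoc _ _ _).symm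
      _ = ∑ k2, S i k2 * (Y k2 ω - ∫ ω', Y k2 ω' ∂μ)
            - ∑ k1, (S * (cov μ Y X * WX)) i k1 * (X k1 ω - ∫ ω', X k1 ω' ∂μ) := by
          rw [Finset.sum_sub_distrib]
          congr 1
          rw [Finset.sum_comm]
          refine Finset.sum_congr rfl fun l _ => ?_
          rw [Matrix.mul_apply, Finset.sum_mul]
  rw [rhs]
  simp only [Matrix.sub_apply, sub_mul, Finset.sum_sub_distrib]
  ring
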